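/- With R_τ = {f ∈ ℚ[x] : ∀ p prime, f(τ_p) ∈ ℤ_p}, a natural number m is a prime element of R_τ if and only if m is a prime number. -/

import Mathlib

open Polynomial

noncomputable def Rtau (τ : (p : ℕ) → [Fact p.Prime] → ℤ_[p]) : Subring (Polynomial ℚ) :=
  ⨅ (p : ℕ) (hp : Fact p.Prime),
    Subring.comap (Polynomial.aeval ((τ p : ℤ_[p]) : ℚ_[p]) : Polynomial ℚ →ₐ[ℚ] ℚ_[p]).toRingHom
      (PadicInt.Coe.ringHom (p := p)).range

lemma mem_Rtau_iff (τ : (p : ℕ) → [Fact p.Prime] → ℤ_[p]) (f : Polynomial ℚ) :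
    f ∈ Rtau τ ↔ ∀ (p : ℕ) (_ : Fact p.Prime),
      ‖(Polynomial.aeval ((τ p : ℤ_[p]) : ℚ_[p]) f : ℚ_[p])‖ ≤ 1 := by
  simp only [Rtau, Subring.mem_iInf, Subring.mem_comap, RingHom.mem_range,
    AlgHom.toRingHom_eq_coe, RingHom.coe_coe]
  refine forall_congr' fun p => forall_congr' fun hp => ⟨?_, ?_⟩
  · rintro ⟨z, hz⟩
    rw [show PadicInt.Coe.ringHom z = (z : ℚ_[p]) from rfl] at hz
    rw [← hz, ← PadicInt.norm_def]
    exact PadicInt.norm_le_one z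
  · intro h
    exact ⟨⟨_, h⟩, rfl⟩

/-- A rational number with `padicNorm ≤ 1` at every prime is an integer. -/
lemma int_of_padicNorm_le_one (q : ℚ) (h : ∀ (p : ℕ), p.Prime → padicNorm p q ≤ 1) :
    ∃ z : ℤ, q = z := by
  by_cases hden : q.den = 1
  · exact ⟨q.num, by rw [← Rat.num_div_den q, hden]; simp⟩
  · obtain ⟨p, hp, hpd⟩ := Nat.exists_prime_and_dvd hden
    haveI : Fact p.Prime := ⟨hp⟩
    exfalso
    have hnum : ¬ (p : ℤ) ∣ q.num := by
      intro hd
      have h1 : p ∣ q.num.natAbs := by simpa using Int.natAbs_dvd_natAbs.mpr hd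
      have := Nat.Coprime.eq_one_of_dvd (Nat.Coprime.coprime_dvd_left h1 q.reduced) hpd
      exact hp.ne_one this
    have hnum1 : padicNorm p (q.num : ℚ) = 1 := (padicNorm.int_eq_one_iff _).mpr hnum
    have hden1 : padicNorm p (q.den : ℚ) < 1 := (padicNorm.nat_lt_one_iff _).mpr hpd
    have hden0 : (0 : ℚ) < padicNorm p (q.den : ℚ) := by
      rcases lt_or_eq_of_le (padicNorm.nonneg (p := p) (q.den : ℚ)) with h' | h'
      · exact h'
      · exact absurd (padicNorm.zero_of_padicNorm_eq_zero h'.symm) (by exact_mod_cast q.den_nz)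
    have hq : padicNorm p q = padicNorm p (q.num : ℚ) / padicNorm p (q.den : ℚ) := by
      conv_lhs => rw [← Rat.num_div_den q]
      exact padicNorm.div _ _
    have : 1 < padicNorm p q := by
      rw [hq, hnum1, lt_div_iff₀ hden0, one_mul]
      exact hden1
    exact absurd (h p hp) (not_le.mpr this)

lemma norm_le_inv_of_lt_one {p : ℕ} [hp : Fact p.Prime] {x : ℚ_[p]} (h : ‖x‖ < 1) :
    ‖x‖ ≤ (p : ℝ)⁻¹ := by
  have := (Padic.norm_le_pow_iff_norm_lt_pow_add_one x (-1)).mpr (by simpa using h)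
  simpa using this

theorem natCast_prime_in_Rtau_iff (τ : (p : ℕ) → [Fact p.Prime] → ℤ_[p]) (m : ℕ) :
    Prime ((m : Rtau τ)) ↔ m.Prime := by
  constructor
  · intro hm
    -- first: m cannot divide any smaller positive natural in Rtau
    have claim : ∀ k : ℕ, 0 < k → k < m → ¬ ((m : Rtau τ) ∣ (k : Rtau τ)) := by
      rintro k hk hkm ⟨c, hc⟩
      have hm0 : (m : ℚ) ≠ 0 := Nat.cast_ne_zero.mpr (by omega)
      have hc' : (k : Polynomial ℚ) = (m : Polynomial ℚ) * (c : Polynomial ℚ) := by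
        have := congrArg (Subring.subtype (Rtau τ)) hc
        push_cast at this ⊢
        exact this
      have hcval : (c : Polynomial ℚ) = C ((k : ℚ) / m) := by
        have h1 : C (m:ℚ) * C ((k:ℚ)/m) = (k : Polynomial ℚ) := by
          rw [← C_mul, mul_div_cancel₀ _ hm0, map_natCast]
        apply mul_left_cancel₀ (show C (m:ℚ) ≠ 0 by simpa using hm0)
        rw [h1, map_natCast, ← hc']
      have hmem := (mem_Rtau_iff τ _).mp c.2
      have hint : ∃ z : ℤ, (k : ℚ) / m = z := by
        apply int_of_padicNorm_le_one
        intro p hp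
        haveI : Fact p.Prime := ⟨hp⟩
        have := hmem p ⟨hp⟩
        rw [hcval, aeval_C, eq_ratCast, Padic.eq_padicNorm] at this
        exact_mod_cast this
      obtain ⟨z, hz⟩ := hint
      have : (m : ℤ) ∣ (k : ℤ) := ⟨z, by
        have := congrArg (fun x : ℚ => (m : ℚ) * x) hz
        rw [mul_div_cancel₀ _ hm0] at this
        exact_mod_cast this⟩
      exact absurd (Nat.le_of_dvd hk (Int.ofNat_dvd.mp this)) (not_le.mpr hkm)
    have hm0 : m ≠ 0 := by
      rintro rfl; exact hm.ne_zero (by push_cast; rfl)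
    have hm1 : m ≠ 1 := by
      rintro rfl; exact hm.not_unit (by push_cast; exact isUnit_one)
    have h2 : 2 ≤ m := by omega
    by_contra hnp
    obtain ⟨a, ha, ha2, ham⟩ := Nat.exists_dvd_of_not_prime2 h2 hnp
    obtain ⟨b, hb⟩ := ha
    have hb2 : 0 < b := by
      rcases Nat.eq_zero_or_pos b with rfl | h
      · omega
      · exact h
    have hbm : b < m := by
      nlinarith
    have hdvd : (m : Rtau τ) ∣ (a : Rtau τ) * (b : Rtau τ) := by
      refine ⟨1, ?_⟩
      rw [mul_one, hb]
      push_cast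
      ring
    rcases hm.2.2 _ _ hdvd with h | h
    · exact claim a (by omega) ham h
    · exact claim b hb2 hbm h
  · intro hm
    haveI hf : Fact m.Prime := ⟨hm⟩
    have hA := fun (g : Rtau τ) => (mem_Rtau_iff τ _).mp g.2 m hf
    constructor
    · intro h
      have : ((m:ℕ) : Polynomial ℚ) = 0 := by
        simpa using congrArg (Subring.subtype (Rtau τ)) h
      exact hm.ne_zero (by exact_mod_cast this)
    constructor
    · rintro ⟨u, hu⟩
      have h1 : (m : Rtau τ) * ↑u⁻¹ = 1 := by rw [← hu, Units.mul_inv_eq_one]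
      have h2 : (m : Polynomial ℚ) * ((↑u⁻¹ : Rtau τ) : Polynomial ℚ) = 1 := by
        have := congrArg (Subring.subtype (Rtau τ)) h1
        push_cast at this
        exact this
      have h3 := congrArg (Polynomial.aeval ((τ m : ℤ_[m]) : ℚ_[m])) h2
      rw [map_mul, map_one, map_natCast] at h3
      have h4 := congrArg (‖·‖) h3
      simp only [norm_mul, norm_one] at h4
      have h5 := hA (↑u⁻¹ : Rtau τ)
      have h6 : ‖(m : ℚ_[m])‖ = (m : ℝ)⁻¹ := Padic.norm_p
      have hmR : (1:ℝ) < m := by exact_mod_cast hm.one_lt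
      rw [h6] at h4
      have hnn : (0:ℝ) ≤ (m:ℝ)⁻¹ := by positivity
      have hinv : (m:ℝ)⁻¹ < 1 := inv_lt_one_of_one_lt₀ hmR
      nlinarith [mul_le_mul_of_nonneg_left h5 hnn]
    · rintro a b ⟨c, hc⟩
      have hc' : (a : Polynomial ℚ) * (b : Polynomial ℚ)
          = (m : Polynomial ℚ) * (c : Polynomial ℚ) := by
        have := congrArg (Subring.subtype (Rtau τ)) hc
        push_cast at this
        exact this
      -- evaluate at τ m
      set x : ℚ_[m] := ((τ m : ℤ_[m]) : ℚ_[m])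
      have heval : Polynomial.aeval x (a : Polynomial ℚ) * Polynomial.aeval x (b : Polynomial ℚ)
          = (m : ℚ_[m]) * Polynomial.aeval x (c : Polynomial ℚ) := by
        have := congrArg (Polynomial.aeval x) hc'
        rwa [map_mul, map_mul, map_natCast] at this
      have h6 : ‖(m : ℚ_[m])‖ = (m : ℝ)⁻¹ := Padic.norm_p
      have hprod : ‖Polynomial.aeval x (a : Polynomial ℚ)‖ * ‖Polynomial.aeval x (b : Polynomial ℚ)‖
          ≤ (m : ℝ)⁻¹ := by
        have := congrArg (‖·‖) heval
        simp only [norm_mul] at this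
        rw [this, h6]
        have := hA c
        have hmpos : (0:ℝ) < (m:ℝ)⁻¹ := by
          have : (0:ℝ) < m := by exact_mod_cast hm.pos
          positivity
        nlinarith
      have key : ‖Polynomial.aeval x (a : Polynomial ℚ)‖ ≤ (m : ℝ)⁻¹
          ∨ ‖Polynomial.aeval x (b : Polynomial ℚ)‖ ≤ (m : ℝ)⁻¹ := by
        by_contra hcon
        push_neg at hcon
        obtain ⟨h1, h2⟩ := hcon
        have ha1 : ‖Polynomial.aeval x (a : Polynomial ℚ)‖ = 1 := by
          refine le_antisymm (hA a) ?_
          by_contra hlt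
          exact absurd (norm_le_inv_of_lt_one (lt_of_not_ge hlt)) (not_le.mpr h1)
        nlinarith [hA b]
      -- now produce the divisor
      have main : ∀ g : Rtau τ, ‖Polynomial.aeval x (g : Polynomial ℚ)‖ ≤ (m : ℝ)⁻¹
          → (m : Rtau τ) ∣ g := by
        intro g hg
        have hd : (C ((m : ℚ)⁻¹) * (g : Polynomial ℚ)) ∈ Rtau τ := by
          rw [mem_Rtau_iff]
          intro p hp
          rw [map_mul, aeval_C, norm_mul]
          have hcast : (algebraMap ℚ ℚ_[p]) ((m:ℚ)⁻¹) = ((m : ℚ_[p]))⁻¹ := by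
            rw [eq_ratCast]; push_cast; ring
          rw [hcast, norm_inv]
          by_cases hpm : p = m
          · subst hpm
            have h6' : ‖(p : ℚ_[p])‖ = (p : ℝ)⁻¹ := Padic.norm_p
            rw [h6', inv_inv]
            have hgp : ‖Polynomial.aeval ((τ p : ℤ_[p]) : ℚ_[p]) (g : Polynomial ℚ)‖ ≤ (p:ℝ)⁻¹ := hg
            calc (p:ℝ) * ‖Polynomial.aeval ((τ p : ℤ_[p]) : ℚ_[p]) (g : Polynomial ℚ)‖
                ≤ (p:ℝ) * (p:ℝ)⁻¹ := by
                  have : (0:ℝ) ≤ (p:ℝ) := by positivity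
                  exact mul_le_mul_of_nonneg_left hgp this
              _ = 1 := by
                  field_simp
                  exact div_self (by exact_mod_cast hp.out.ne_zero)
          · have hne : ¬ p ∣ m := by
              intro hdvd
              exact hpm ((Nat.prime_dvd_prime_iff_eq hp.out hm).mp hdvd)
            have h7 : ‖(m : ℚ_[p])‖ = 1 := by
              rw [show ((m:ℕ) : ℚ_[p]) = (((m:ℕ) : ℚ) : ℚ_[p]) by push_cast; ring,
                Padic.eq_padicNorm]
              exact_mod_cast (padicNorm.nat_eq_one_iff m).mpr hne
            rw [h7, inv_one, one_mul]
            exact (mem_Rtau_iff τ _).mp g.2 p hp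
        refine ⟨⟨_, hd⟩, ?_⟩
        apply Subtype.ext
        push_cast
        rw [← map_natCast (C : ℚ →+* Polynomial ℚ) m, ← mul_assoc, ← C_mul]
        have hm0 : ((m:ℕ) : ℚ) ≠ 0 := by exact_mod_cast hm.ne_zero
        rw [mul_inv_cancel₀ hm0, C_1, one_mul]
      rcases key with h | h
      · exact Or.inl (main a h)
      · exact Or.inr (main b h)
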